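/- Let λ > 2. For every g ∈ Γ_λ with tr g > 2 there exists h ∈ Γ_λ such that the conjugate g' := h g h⁻¹ = !![a, b; c, d] satisfies c ≠ 0 and, writing x₊ = (a − d + √((a+d)² − 4))/(2c) for the attracting and x₋ = (a − d − √((a+d)² − 4))/(2c) for the repelling fixed point of g', either x₋ < −1 < x₊, or x₊ < 1 < x₋. (Geometrically: every periodic geodesic of the Hecke triangle surface has a lift to the upper half-plane crossing the vertical line Re z = −1 rightward or the vertical line Re z = 1 leftward; this is the statement that the set Ĉ_R is a cross section for the geodesic flow in the relaxed sense that every periodic geodesic intersects it.) -/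

import Mathlib

open scoped MatrixGroups
open Matrix

namespace CrossSec

lemma absL2 (x y μ : ℝ) (h : |x| < |μ*y|) : 0 < (x + μ*y)*(μ*y) := by
  have h0 : 0 ≤ |x| := abs_nonneg x
  nlinarith [abs_mul_abs_self x, abs_mul_abs_self (μ*y), neg_abs_le (x*(μ*y)), abs_mul x (μ*y),
    mul_lt_mul_of_pos_right h (lt_of_le_of_lt h0 h)]

lemma absL1 (x y μ : ℝ) (h : |x| < |y|) (hm : 2 < |μ|) : |y| < |x + μ*y| := by
  have hy : 0 < |y| := lt_of_le_of_lt (abs_nonneg x) h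
  have hmul : |μ*y| = |μ| * |y| := abs_mul μ y
  have h2 : 2*|y| < |μ*y| := by rw [hmul]; nlinarith
  have h3 : |μ*y| ≤ |x + μ*y| + |x| := by
    calc |μ*y| = |(x + μ*y) + (-x)| := by ring_nf
    _ ≤ |x + μ*y| + |(-x)| := abs_add_le _ _
    _ = |x + μ*y| + |x| := by rw [abs_neg]
  linarith

lemma sq_of_abs_lt {x y : ℝ} (h : |x| < |y|) : x^2 < y^2 := by
  have := pow_lt_pow_left₀ h (abs_nonneg x) (n := 2) two_ne_zero
  simpa [sq_abs] using this

lemma abs_lt_of_sq {x y : ℝ} (h : x^2 < y^2) : |x| < |y| := by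
  nlinarith [abs_nonneg x, abs_nonneg y, abs_mul_abs_self x, abs_mul_abs_self y]

lemma posdiv (p q : ℝ) (h : 0 < p * q) (hq : 0 < q) : 0 < p := by
  by_contra hp; push_neg at hp; nlinarith

lemma negdiv (p q : ℝ) (h : 0 < p * q) (hq : q < 0) : p < 0 := by
  by_contra hp; push_neg at hp; nlinarith

lemma habs_aux (μ x y : ℝ) (hm : 2 < |μ|) (hxy : |x| < |y|) : |x| < |μ*y| := by
  have e : |μ*y| = |μ| * |y| := abs_mul μ y
  nlinarith [abs_nonneg y]

lemma hcb_aux (μ b c d : ℝ) (hm : 2 < |μ|) (h1 : |c| < |d|) (h7 : |b| < |d|) :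
    |c - b| < |μ*(-d)| := by
  have e : |μ*(-d)| = |μ| * |d| := by rw [show μ*(-d) = -(μ*d) by ring, abs_neg, abs_mul]
  have h' : |c - b| ≤ |c| + |b| := abs_sub c b
  have hd : 0 < |d| := lt_of_le_of_lt (abs_nonneg b) h7
  nlinarith

lemma cd_pos (c d : ℝ) (h : 0 < c*(d-c)) : 0 < c*d := by
  have e : c*d = c*(d-c) + c^2 := by ring
  have := sq_nonneg c
  linarith

lemma cd_neg (c d : ℝ) (h : c*(c+d) < 0) : c*d < 0 := by
  have e : c*d = c*(c+d) - c^2 := by ring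
  have := sq_nonneg c
  linarith

set_option maxHeartbeats 1000000 in
lemma step_real (lam μ a b c d : ℝ) (hlam : 2 < lam) (hmu : lam ≤ |μ|)
    (h6 : a^2 < c^2) (h7 : b^2 < d^2) (h1 : c^2 < d^2)
    (h2 : (a+b)^2 < (c+d)^2) (h3 : (a-b)^2 < (c-d)^2) :
    (c^2 < (-a - μ*c)^2 ∧ d^2 < (-b - μ*d)^2 ∧ (-a - μ*c)^2 < (-b - μ*d)^2 ∧
      (c+d)^2 < ((-a - μ*c) + (-b - μ*d))^2 ∧ (c-d)^2 < ((-a - μ*c) - (-b - μ*d))^2)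
    ∧ (0 < c*(d - c) → 0 < (-a - μ*c)*((-b - μ*d) - (-a - μ*c)) ∧ 0 < (-a - μ*c)*(c + (-b - μ*d)))
    ∧ (c*(c+d) < 0 → (-a - μ*c)*((-a - μ*c) + (-b - μ*d)) < 0 ∧ (-a - μ*c)*(c + (-b - μ*d)) < 0) := by
  have hm2 : 2 < |μ| := lt_of_lt_of_le hlam hmu
  have hmne : μ ≠ 0 := by intro h; rw [h] at hm2; simp at hm2; linarith
  have hmusq : 0 < μ^2 := by positivity
  have a6 : |a| < |c| := abs_lt_of_sq h6
  have a7 : |b| < |d| := abs_lt_of_sq h7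
  have a1 : |c| < |d| := abs_lt_of_sq h1
  have a2 : |a+b| < |c+d| := abs_lt_of_sq h2
  have a3 : |a-b| < |c-d| := abs_lt_of_sq h3
  have g6 : |c| < |a + μ*c| := absL1 a c μ a6 hm2
  have g7 : |d| < |b + μ*d| := absL1 b d μ a7 hm2
  have g2 : |c+d| < |(a+b) + μ*(c+d)| := absL1 _ _ _ a2 hm2
  have g3 : |c-d| < |(a-b) + μ*(c-d)| := absL1 _ _ _ a3 hm2
  have s6 : 0 < (a + μ*c)*(μ*c) := absL2 a c μ (habs_aux μ a c hm2 a6)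
  have s2 : 0 < ((a+b) + μ*(c+d))*(μ*(c+d)) := absL2 _ _ _ (habs_aux μ _ _ hm2 a2)
  have adc : |b - a| < |d - c| := by
    rw [abs_sub_comm b a, abs_sub_comm d c]; exact a3
  have sdc : 0 < ((b-a) + μ*(d-c))*(μ*(d-c)) := absL2 _ _ _ (habs_aux μ _ _ hm2 adc)
  have s5 : 0 < ((c - b) + μ*(-d))*(μ*(-d)) := absL2 _ _ _ (hcb_aux μ b c d hm2 a1 a7)
  constructor
  · refine ⟨?_, ?_, ?_, ?_, ?_⟩
    · have h := sq_of_abs_lt g6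
      rw [show (-a - μ*c)^2 = (a + μ*c)^2 from by ring]; exact h
    · have h := sq_of_abs_lt g7
      rw [show (-b - μ*d)^2 = (b + μ*d)^2 from by ring]; exact h
    · have hq : 0 < μ^2*(d^2 - c^2) := mul_pos hmusq (by linarith)
      have h' := mul_pos s2 sdc
      rw [show ((a+b) + μ*(c+d))*(μ*(c+d)) * (((b-a) + μ*(d-c))*(μ*(d-c)))
          = (((a+b) + μ*(c+d)) * ((b-a) + μ*(d-c))) * (μ^2*(d^2 - c^2)) from by ring] at h'
      have hff := posdiv _ _ h' hq
      have e : (b + μ*d)^2 - (a + μ*c)^2 = ((a+b) + μ*(c+d)) * ((b-a) + μ*(d-c)) := by ring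
      rw [show (-a - μ*c)^2 = (a + μ*c)^2 from by ring,
          show (-b - μ*d)^2 = (b + μ*d)^2 from by ring]
      linarith
    · have h := sq_of_abs_lt g2
      rw [show ((-a - μ*c) + (-b - μ*d))^2 = ((a+b) + μ*(c+d))^2 from by ring]; exact h
    · have h := sq_of_abs_lt g3
      rw [show ((-a - μ*c) - (-b - μ*d))^2 = ((a-b) + μ*(c-d))^2 from by ring]; exact h
  constructor
  · intro h4
    constructor
    · have hq : 0 < μ^2*(c*(d-c)) := mul_pos hmusq h4
      have h' := mul_pos s6 sdc
      rw [show ((a + μ*c)*(μ*c)) * (((b-a) + μ*(d-c))*(μ*(d-c)))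
          = ((a + μ*c) * ((b-a) + μ*(d-c))) * (μ^2*(c*(d-c))) from by ring] at h'
      have hG := posdiv _ _ h' hq
      rw [show (-a - μ*c)*((-b - μ*d) - (-a - μ*c)) = (a + μ*c) * ((b-a) + μ*(d-c)) from by ring]
      exact hG
    · have hcd : 0 < c*d := cd_pos c d h4
      have hq2 : μ^2*(-(c*d)) < 0 := by
        have := mul_pos hmusq hcd
        nlinarith [this]
      have h' := mul_pos s6 s5
      rw [show ((a + μ*c)*(μ*c)) * (((c - b) + μ*(-d))*(μ*(-d)))
          = ((a + μ*c) * ((c - b) + μ*(-d))) * (μ^2*(-(c*d))) from by ring] at h'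
      have hG := negdiv _ _ h' hq2
      rw [show (-a - μ*c)*(c + (-b - μ*d)) = -((a + μ*c) * ((c - b) + μ*(-d))) from by ring]
      linarith
  · intro h4
    constructor
    · have hq : μ^2*(c*(c+d)) < 0 := by
        have h5 : 0 < μ^2*(-(c*(c+d))) := mul_pos hmusq (by linarith)
        linarith [h5]
      have h' := mul_pos s6 s2
      rw [show ((a + μ*c)*(μ*c)) * (((a+b) + μ*(c+d))*(μ*(c+d)))
          = ((a + μ*c) * ((a+b) + μ*(c+d))) * (μ^2*(c*(c+d))) from by ring] at h'
      have hG := negdiv _ _ h' hq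
      rw [show (-a - μ*c)*((-a - μ*c) + (-b - μ*d)) = (a + μ*c) * ((a+b) + μ*(c+d)) from by ring]
      exact hG
    · have hcd : c*d < 0 := cd_neg c d h4
      have hq2 : 0 < μ^2*(-(c*d)) := mul_pos hmusq (by linarith)
      have h' := mul_pos s6 s5
      rw [show ((a + μ*c)*(μ*c)) * (((c - b) + μ*(-d))*(μ*(-d)))
          = ((a + μ*c) * ((c - b) + μ*(-d))) * (μ^2*(-(c*d))) from by ring] at h'
      have hG := posdiv _ _ h' hq2
      rw [show (-a - μ*c)*(c + (-b - μ*d)) = -((a + μ*c) * ((c - b) + μ*(-d))) from by ring]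
      linarith


lemma final_pos (a b c d : ℝ) (hdet : a*d - b*c = 1) (htr : 2 < a + d)
    (hc : 0 < c) (hQ : c + a - d - b < 0) :
    (a - d - Real.sqrt ((a + d) ^ 2 - 4)) / (2 * c) < -1 ∧
      -1 < (a - d + Real.sqrt ((a + d) ^ 2 - 4)) / (2 * c) := by
  have hD : 0 < (a+d)^2 - 4 := by nlinarith
  set s := Real.sqrt ((a + d) ^ 2 - 4) with hs
  have hs2 : s^2 = (a+d)^2 - 4 := Real.sq_sqrt hD.le
  have hs0 : 0 ≤ s := Real.sqrt_nonneg _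
  have e : s^2 - (a - d + 2*c)^2 = (-4*c)*(c + a - d - b) := by
    rw [hs2]; linear_combination 4*hdet
  have key : (a - d + 2*c)^2 < s^2 := by nlinarith [mul_pos_of_neg_of_neg (show -4*c < 0 by linarith) hQ]
  have h1 : a - d + 2*c < s := by nlinarith
  have h2 : -s < a - d + 2*c := by nlinarith
  constructor
  · rw [div_lt_iff₀ (by linarith : (0:ℝ) < 2*c)]; linarith
  · rw [lt_div_iff₀ (by linarith : (0:ℝ) < 2*c)]; linarith

lemma final_neg (a b c d : ℝ) (hdet : a*d - b*c = 1) (htr : 2 < a + d)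
    (hc : c < 0) (hQ : 0 < c + d - a - b) :
    (a - d + Real.sqrt ((a + d) ^ 2 - 4)) / (2 * c) < 1 ∧
      1 < (a - d - Real.sqrt ((a + d) ^ 2 - 4)) / (2 * c) := by
  have hD : 0 < (a+d)^2 - 4 := by nlinarith
  set s := Real.sqrt ((a + d) ^ 2 - 4) with hs
  have hs2 : s^2 = (a+d)^2 - 4 := Real.sq_sqrt hD.le
  have hs0 : 0 ≤ s := Real.sqrt_nonneg _
  have e : s^2 - (a - d - 2*c)^2 = (-4*c)*(c + d - a - b) := by
    rw [hs2]; linear_combination 4*hdet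
  have key : (a - d - 2*c)^2 < s^2 := by nlinarith [mul_pos (show 0 < -4*c by linarith) hQ]
  have h1 : a - d - 2*c < s := by nlinarith
  have h2 : -s < a - d - 2*c := by nlinarith
  constructor
  · rw [div_lt_iff_of_neg (by linarith : 2*c < (0:ℝ))]; linarith
  · rw [lt_div_iff_of_neg (by linarith : 2*c < (0:ℝ))]; linarith

def sword (S T : SL(2, ℝ)) : List ℤ → SL(2, ℝ)
  | [] => 1
  | n :: l => S * T^n * sword S T l

def bumpLast (m : ℤ) : List ℤ → List ℤ
  | [] => []
  | [n] => [n + m]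
  | n :: k :: l => n :: bumpLast m (k :: l)

lemma bumpLast_ne_nil (m : ℤ) (l : List ℤ) (h : l ≠ []) : bumpLast m l ≠ [] := by
  match l with
  | [] => exact absurd rfl h
  | [n] => simp [bumpLast]
  | n :: k :: l => simp [bumpLast]

lemma bumpLast_length (m : ℤ) : ∀ l : List ℤ, (bumpLast m l).length = l.length
  | [] => rfl
  | [n] => rfl
  | n :: k :: l => by simp [bumpLast, bumpLast_length m (k :: l)]

section Grp

variable (S T : SL(2, ℝ))

lemma sword_append : ∀ l1 l2 : List ℤ, sword S T (l1 ++ l2) = sword S T l1 * sword S T l2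
  | [], l2 => by simp [sword]
  | n :: l1, l2 => by
    simp only [List.cons_append, List.append_eq, sword, sword_append l1 l2, mul_assoc]

lemma sword_mul_T : ∀ (l : List ℤ), l ≠ [] → ∀ m : ℤ,
    sword S T l * T^m = sword S T (bumpLast m l)
  | [], h, m => absurd rfl h
  | [n], _, m => by
    simp [sword, bumpLast, mul_assoc, ← _root_.zpow_add]
  | n :: k :: l, _, m => by
    have ih := sword_mul_T (k :: l) (by simp) m
    simp only [sword, bumpLast, mul_assoc] at ih ⊢
    rw [ih]

lemma sword_singleton (n : ℤ) : sword S T [n] = S * T^n := by simp [sword]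


lemma Sinv (hSneg : S * S = -1) : S⁻¹ = -S := by
  apply inv_eq_of_mul_eq_one_right
  rw [mul_neg, hSneg, neg_neg]

lemma sword_inv (hSneg : S * S = -1) : ∀ l : List ℤ, ∃ (ε : SL(2,ℝ)) (m : ℤ) (l' : List ℤ),
    (ε = 1 ∨ ε = -1) ∧ (sword S T l)⁻¹ = ε * (T^m * sword S T l')
  | [] => ⟨1, 0, [], Or.inl rfl, by simp [sword]⟩
  | n :: l => by
    obtain ⟨ε, m, l', hε, e⟩ := sword_inv hSneg l
    have key : (sword S T (n :: l))⁻¹ = (-ε) * ((T^m * sword S T l' * T^(-n)) * S) := by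
      show (S * T^n * sword S T l)⁻¹ = _
      rw [_root_.mul_inv_rev, _root_.mul_inv_rev, e, Sinv S hSneg]
      rcases hε with rfl | rfl <;>
        simp only [one_mul, neg_mul, mul_neg, neg_neg, neg_one_mul, ← _root_.zpow_neg, neg_inj] <;> group
    rcases eq_or_ne l' [] with rfl | hne
    · refine ⟨-ε, m - n, [0], ?_, ?_⟩
      · rcases hε with rfl | rfl
        · right; rfl
        · left; simp
      · rw [key, sword_singleton]
        rcases hε with rfl | rfl <;>
          simp only [sword, one_mul, neg_mul, mul_one, mul_neg, neg_neg, neg_inj] <;> group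
    · refine ⟨-ε, m, bumpLast (-n) l' ++ [0], ?_, ?_⟩
      · rcases hε with rfl | rfl
        · right; rfl
        · left; simp
      · rw [key, sword_append, sword_singleton, ← sword_mul_T S T l' hne (-n)]
        rcases hε with rfl | rfl <;>
          simp only [one_mul, neg_mul, mul_one, mul_neg, neg_neg, neg_inj] <;> group

lemma eps_mul_cases {ε1 ε2 : SL(2,ℝ)} (h1 : ε1 = 1 ∨ ε1 = -1) (h2 : ε2 = 1 ∨ ε2 = -1) :
    ε1 * ε2 = 1 ∨ ε1 * ε2 = -1 := by
  rcases h1 with rfl | rfl <;> rcases h2 with rfl | rfl <;> simp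


set_option maxHeartbeats 400000 in
lemma normal_form_mul (hSneg : S * S = -1) (ε1 ε2 : SL(2,ℝ)) (hε1 : ε1 = 1 ∨ ε1 = -1)
    (hε2 : ε2 = 1 ∨ ε2 = -1) (m1 m2 : ℤ) (l1 l2 : List ℤ) :
    ∃ (ε : SL(2,ℝ)) (m : ℤ) (l : List ℤ),
    (ε = 1 ∨ ε = -1) ∧ (ε1 * (T^m1 * sword S T l1)) * (ε2 * (T^m2 * sword S T l2)) = ε * (T^m * sword S T l) := by
  rcases eq_or_ne l1 [] with rfl | hne
  · refine ⟨ε1 * ε2, m1 + m2, l2, eps_mul_cases hε1 hε2, ?_⟩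
    rcases hε1 with rfl | rfl <;> rcases hε2 with rfl | rfl <;>
      simp only [sword, one_mul, mul_one, neg_mul, mul_neg, neg_neg, neg_inj] <;> group
  · refine ⟨ε1 * ε2, m1, bumpLast m2 l1 ++ l2, eps_mul_cases hε1 hε2, ?_⟩
    rw [sword_append, ← sword_mul_T S T l1 hne m2]
    rcases hε1 with rfl | rfl <;> rcases hε2 with rfl | rfl <;>
      simp only [sword, one_mul, mul_one, neg_mul, mul_neg, neg_neg, neg_inj] <;> group

set_option maxHeartbeats 400000 in
lemma normal_form_inv (hSneg : S * S = -1) (ε : SL(2,ℝ)) (hε : ε = 1 ∨ ε = -1) (m : ℤ) (l : List ℤ) :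
    ∃ (ε'' : SL(2,ℝ)) (m'' : ℤ) (l'' : List ℤ),
    (ε'' = 1 ∨ ε'' = -1) ∧ (ε * (T^m * sword S T l))⁻¹ = ε'' * (T^m'' * sword S T l'') := by
  obtain ⟨ε', m', l', hε', e⟩ := sword_inv S T hSneg l
  have hεinv : ε⁻¹ = ε := by rcases hε with rfl | rfl <;> simp
  have key : (ε * (T^m * sword S T l))⁻¹ = ε' * ((ε * (T^m' * sword S T l')) * T^(-m)) := by
    rw [_root_.mul_inv_rev, _root_.mul_inv_rev, hεinv, e]
    rcases hε with rfl | rfl <;> rcases hε' with rfl | rfl <;>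
      simp only [one_mul, mul_one, neg_mul, mul_neg, neg_neg, neg_inj, ← _root_.zpow_neg] <;> group
  rcases eq_or_ne l' [] with rfl | hne
  · refine ⟨ε' * ε, m' - m, [], eps_mul_cases hε' hε, ?_⟩
    rw [key]
    rcases hε with rfl | rfl <;> rcases hε' with rfl | rfl <;>
      simp only [sword, one_mul, mul_one, neg_mul, mul_neg, neg_neg, neg_inj] <;> group
  · refine ⟨ε' * ε, m', bumpLast (-m) l', eps_mul_cases hε' hε, ?_⟩
    rw [key, ← sword_mul_T S T l' hne (-m)]
    rcases hε with rfl | rfl <;> rcases hε' with rfl | rfl <;>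
      simp only [sword, one_mul, mul_one, neg_mul, mul_neg, neg_neg, neg_inj] <;> group

lemma normal_form (hSneg : S * S = -1) : ∀ γ ∈ Subgroup.closure {S, T},
    ∃ (ε : SL(2,ℝ)) (m : ℤ) (l : List ℤ),
    (ε = 1 ∨ ε = -1) ∧ γ = ε * (T^m * sword S T l) := by
  intro γ hγ
  induction hγ using Subgroup.closure_induction with
  | mem x hx =>
    rcases hx with rfl | rfl
    · exact ⟨1, 0, [0], Or.inl rfl, by simp [sword]⟩
    · exact ⟨1, 1, [], Or.inl rfl, by simp [sword]⟩
  | one => exact ⟨1, 0, [], Or.inl rfl, by simp [sword]⟩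
  | mul x y hx hy ihx ihy =>
    obtain ⟨ε1, m1, l1, hε1, rfl⟩ := ihx
    obtain ⟨ε2, m2, l2, hε2, rfl⟩ := ihy
    exact normal_form_mul S T hSneg ε1 ε2 hε1 hε2 m1 m2 l1 l2
  | inv x hx ihx =>
    obtain ⟨ε, m, l, hε, rfl⟩ := ihx
    exact normal_form_inv S T hSneg ε hε m l

lemma eps_neg {ε : SL(2,ℝ)} (h : ε = 1 ∨ ε = -1) : -ε = 1 ∨ -ε = -1 := by
  rcases h with rfl | rfl
  · right; rfl
  · left; simp

lemma S_mul_sword (hSneg : S * S = -1) (n : ℤ) (l : List ℤ) :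
    S * sword S T (n :: l) = -(T^n * sword S T l) := by
  show S * (S * T^n * sword S T l) = _
  rw [show S * (S * T^n * sword S T l) = (S*S) * (T^n * sword S T l) from by group, hSneg,
    neg_one_mul]

lemma sword_zero_cons (hSneg : S * S = -1) (n : ℤ) (l : List ℤ) :
    sword S T (0 :: n :: l) = -(T^n * sword S T l) := by
  show S * T^(0:ℤ) * sword S T (n :: l) = _
  rw [zpow_zero, mul_one, S_mul_sword S T hSneg]

lemma trace_conj (h x : SL(2,ℝ)) :
    Matrix.trace ((h * x * h⁻¹ : SL(2,ℝ)) : Matrix (Fin 2) (Fin 2) ℝ)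
      = Matrix.trace ((x : SL(2,ℝ)) : Matrix (Fin 2) (Fin 2) ℝ) := by
  rw [Matrix.SpecialLinearGroup.coe_mul, Matrix.trace_mul_comm,
    ← Matrix.SpecialLinearGroup.coe_mul]
  rw [show h⁻¹ * (h * x) = x from by group]

lemma red1 (hSneg : S * S = -1) (n : ℤ) (l2' : List ℤ) (ε : SL(2,ℝ)) (hε : ε = 1 ∨ ε = -1) :
    T^(-n) * (ε * sword S T (0 :: n :: l2')) * (T^(-n))⁻¹
      = (-ε) * (sword S T l2' * T^n) := by
  rw [sword_zero_cons S T hSneg]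
  rcases hε with rfl | rfl <;>
    simp only [one_mul, mul_one, neg_mul, mul_neg, neg_neg, neg_inj, _root_.zpow_neg] <;> group

lemma red2 (hSneg : S * S = -1) (m1 n : ℤ) (l1' l2' : List ℤ) (ε : SL(2,ℝ)) (hε : ε = 1 ∨ ε = -1) :
    ε * sword S T ((m1 :: l1') ++ 0 :: n :: l2')
      = (-ε) * sword S T (bumpLast n (m1 :: l1') ++ l2') := by
  rw [sword_append, sword_zero_cons S T hSneg, sword_append,
    ← sword_mul_T S T (m1 :: l1') (by simp) n]
  rcases hε with rfl | rfl <;>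
    simp only [one_mul, mul_one, neg_mul, mul_neg, neg_neg, neg_inj] <;> group

lemma hSS (hSneg : S * S = -1) (z : SL(2,ℝ)) : S * (S * z) = -z := by
  rw [← mul_assoc, hSneg, neg_one_mul]

lemma hSS2 (hSneg : S * S = -1) (z : SL(2,ℝ)) : z * S * S = -z := by
  rw [mul_assoc, hSneg, mul_neg_one]

lemma red3 (hSneg : S * S = -1) (m1 : ℤ) (l1' : List ℤ) (ε : SL(2,ℝ)) (hε : ε = 1 ∨ ε = -1) :
    (T^(-m1) * S) * (ε * sword S T ((m1 :: l1') ++ [0])) * (T^(-m1) * S)⁻¹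
      = (-ε) * (sword S T l1' * T^m1) := by
  rw [sword_append, sword_singleton, _root_.mul_inv_rev, Sinv S hSneg]
  show T^(-m1) * S * (ε * (S * T^m1 * sword S T l1' * (S * T^(0:ℤ)))) * (-S * (T^(-m1))⁻¹) = _
  rcases hε with rfl | rfl <;>
    simp only [zpow_zero, one_mul, mul_one, neg_mul, mul_neg, neg_neg, neg_inj, ← mul_assoc,
      hSS2 S hSneg] <;>
    group

lemma N_coe (hS : (S : Matrix (Fin 2) (Fin 2) ℝ) = !![0, 1; -1, 0]) :
    ((S*S : SL(2,ℝ)) : Matrix (Fin 2) (Fin 2) ℝ) = -1 := by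
  rw [Matrix.SpecialLinearGroup.coe_mul, hS, Matrix.mul_fin_two]
  norm_num
  ext i j
  fin_cases i <;> fin_cases j <;> simp [Matrix.one_apply]

lemma N_central (hS : (S : Matrix (Fin 2) (Fin 2) ℝ) = !![0, 1; -1, 0]) (x : SL(2,ℝ)) :
    Commute (S*S) x := by
  unfold Commute SemiconjBy
  apply Subtype.ext
  simp only [Matrix.SpecialLinearGroup.coe_mul, N_coe S hS]
  simp

lemma N_sq (hS : (S : Matrix (Fin 2) (Fin 2) ℝ) = !![0, 1; -1, 0]) : (S*S)*(S*S) = 1 := by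
  apply Subtype.ext
  simp only [Matrix.SpecialLinearGroup.coe_mul, N_coe S hS, Matrix.SpecialLinearGroup.coe_one]
  simp

lemma N_pow (hS : (S : Matrix (Fin 2) (Fin 2) ℝ) = !![0, 1; -1, 0]) (j : ℕ) :
    (S*S)^j = 1 ∨ (S*S)^j = S*S := by
  induction j with
  | zero => left; rfl
  | succ k ih =>
    rcases ih with h | h
    · right; rw [pow_succ, h, one_mul]
    · left; rw [pow_succ, h, N_sq S hS]

lemma T_zpow (lam : ℝ) (hT : (T : Matrix (Fin 2) (Fin 2) ℝ) = !![1, lam; 0, 1]) (m : ℤ) :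
    ((T^m : SL(2,ℝ)) : Matrix (Fin 2) (Fin 2) ℝ) = !![1, m*lam; 0, 1] := by
  induction m using Int.induction_on with
  | zero =>
    rw [zpow_zero, Matrix.SpecialLinearGroup.coe_one, Matrix.one_fin_two]
    norm_num
  | succ k ih =>
    rw [show ((k:ℤ)+1) = (k+1 : ℤ) from rfl, _root_.zpow_add_one,
      Matrix.SpecialLinearGroup.coe_mul, ih, hT, Matrix.mul_fin_two]
    norm_num; ring
  | pred k ih =>
    rw [_root_.zpow_sub_one, Matrix.SpecialLinearGroup.coe_mul, ih,
      Matrix.SpecialLinearGroup.coe_inv, hT, Matrix.adjugate_fin_two_of, Matrix.mul_fin_two]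
    norm_num; ring


lemma not_tr_eps_T (lam : ℝ) (hT : (T : Matrix (Fin 2) (Fin 2) ℝ) = !![1, lam; 0, 1])
    (ε : SL(2,ℝ)) (hε : ε = 1 ∨ ε = -1) (m : ℤ) :
    ¬ (2 < Matrix.trace ((ε * T^m : SL(2,ℝ)) : Matrix (Fin 2) (Fin 2) ℝ)) := by
  have hm := T_zpow T lam hT m
  rcases hε with rfl | rfl
  · rw [one_mul, hm, Matrix.trace_fin_two_of]; norm_num
  · rw [neg_one_mul,
      show ((-(T^m) : SL(2,ℝ)) : Matrix (Fin 2) (Fin 2) ℝ)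
        = -((T^m : SL(2,ℝ)) : Matrix (Fin 2) (Fin 2) ℝ) from by simp,
      hm, Matrix.trace_neg, Matrix.trace_fin_two_of]
    norm_num

lemma not_tr_eps_S (hS : (S : Matrix (Fin 2) (Fin 2) ℝ) = !![0, 1; -1, 0])
    (ε : SL(2,ℝ)) (hε : ε = 1 ∨ ε = -1) :
    ¬ (2 < Matrix.trace ((ε * S : SL(2,ℝ)) : Matrix (Fin 2) (Fin 2) ℝ)) := by
  rcases hε with rfl | rfl
  · rw [one_mul, hS, Matrix.trace_fin_two_of]; norm_num
  · rw [neg_one_mul,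
      show ((-S : SL(2,ℝ)) : Matrix (Fin 2) (Fin 2) ℝ)
        = -((S : SL(2,ℝ)) : Matrix (Fin 2) (Fin 2) ℝ) from by simp,
      hS, Matrix.trace_neg, Matrix.trace_fin_two_of]
    norm_num

lemma conj_conj (a b γ : SL(2,ℝ)) : (a*b)*γ*(a*b)⁻¹ = a*(b*γ*b⁻¹)*a⁻¹ := by group

lemma reduce (lam : ℝ)
    (hS : (S : Matrix (Fin 2) (Fin 2) ℝ) = !![0, 1; -1, 0])
    (hT : (T : Matrix (Fin 2) (Fin 2) ℝ) = !![1, lam; 0, 1])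
    (hSneg : S * S = -1) :
    ∀ (fuel : ℕ) (l : List ℤ) (ε : SL(2,ℝ)), (ε = 1 ∨ ε = -1) → l.length ≤ fuel →
    2 < Matrix.trace ((ε * sword S T l : SL(2,ℝ)) : Matrix (Fin 2) (Fin 2) ℝ) →
    ∃ h ∈ Subgroup.closure ({S, T} : Set (SL(2,ℝ))), ∃ (ε' : SL(2,ℝ)) (l' : List ℤ),
      (ε' = 1 ∨ ε' = -1) ∧ l' ≠ [] ∧ (∀ n ∈ l', n ≠ 0) ∧
      h * (ε * sword S T l) * h⁻¹ = ε' * sword S T l' := by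
  have hTmem : T ∈ Subgroup.closure ({S, T} : Set (SL(2,ℝ))) :=
    Subgroup.subset_closure (by simp)
  have hSmem : S ∈ Subgroup.closure ({S, T} : Set (SL(2,ℝ))) :=
    Subgroup.subset_closure (by simp)
  intro fuel
  induction fuel with
  | zero =>
    intro l ε hε hlen htr
    have hl : l = [] := List.eq_nil_of_length_eq_zero (Nat.le_zero.mp hlen)
    subst hl
    refine absurd ?_ (not_tr_eps_T T lam hT ε hε 0)
    rw [show ε * T^(0:ℤ) = ε * sword S T [] from by simp [sword]]
    exact htr
  | succ f ih =>
    intro l ε hε hlen htr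
    by_cases hall : ∀ n ∈ l, n ≠ 0
    · rcases eq_or_ne l [] with rfl | hne
      · refine absurd ?_ (not_tr_eps_T T lam hT ε hε 0)
        rw [show ε * T^(0:ℤ) = ε * sword S T [] from by simp [sword]]
        exact htr
      · exact ⟨1, one_mem _, ε, l, hε, hne, hall, by rw [one_mul, inv_one, mul_one]⟩
    · push_neg at hall
      obtain ⟨n0, hmem, hn0⟩ := hall
      rw [hn0] at hmem
      obtain ⟨l1, l2, rfl⟩ := List.append_of_mem hmem
      rcases l1 with _ | ⟨m1, l1'⟩
      · rcases l2 with _ | ⟨n, l2'⟩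
        · -- l = [0] : γ = ε * S up to T^0
          refine absurd ?_ (not_tr_eps_S S hS ε hε)
          rw [show ε * S = ε * sword S T ([] ++ [0]) from by simp [sword]]
          exact htr
        · -- l = 0 :: n :: l2'
          simp only [List.nil_append] at htr ⊢
          have hid := red1 S T hSneg n l2' ε hε
          rcases eq_or_ne l2' [] with rfl | hne2
          · refine absurd ?_ (not_tr_eps_T T lam hT (-ε) (eps_neg hε) n)
            rw [show -ε * T^n = -ε * (sword S T [] * T^n) from by simp [sword],
              ← hid, trace_conj]
            exact htr
          · rw [sword_mul_T S T l2' hne2 n] at hid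
            have htr2 : 2 < Matrix.trace
                ((-ε * sword S T (bumpLast n l2') : SL(2,ℝ)) : Matrix (Fin 2) (Fin 2) ℝ) := by
              rw [← hid, trace_conj]; exact htr
            have hlen2 : (bumpLast n l2').length ≤ f := by
              rw [bumpLast_length]
              simp only [List.length_append, List.length_cons, List.length_nil] at hlen
              omega
            obtain ⟨h2, h2mem, ε', l'', hε', hne', hnz', hfin⟩ :=
              ih (bumpLast n l2') (-ε) (eps_neg hε) hlen2 htr2
            refine ⟨h2 * T^(-n), mul_mem h2mem (zpow_mem hTmem _), ε', l'', hε', hne', hnz', ?_⟩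
            rw [conj_conj, hid, hfin]
      · rcases l2 with _ | ⟨n, l2'⟩
        · -- l = (m1 :: l1') ++ [0]
          have hid := red3 S T hSneg m1 l1' ε hε
          rcases eq_or_ne l1' [] with rfl | hne2
          · refine absurd ?_ (not_tr_eps_T T lam hT (-ε) (eps_neg hε) m1)
            rw [show -ε * T^m1 = -ε * (sword S T [] * T^m1) from by simp [sword],
              ← hid, trace_conj]
            exact htr
          · rw [sword_mul_T S T l1' hne2 m1] at hid
            have htr2 : 2 < Matrix.trace
                ((-ε * sword S T (bumpLast m1 l1') : SL(2,ℝ)) : Matrix (Fin 2) (Fin 2) ℝ) := by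
              rw [← hid, trace_conj]; exact htr
            have hlen2 : (bumpLast m1 l1').length ≤ f := by
              rw [bumpLast_length]
              simp only [List.length_append, List.length_cons, List.length_nil] at hlen
              omega
            obtain ⟨h2, h2mem, ε', l'', hε', hne', hnz', hfin⟩ :=
              ih (bumpLast m1 l1') (-ε) (eps_neg hε) hlen2 htr2
            refine ⟨h2 * (T^(-m1) * S), mul_mem h2mem (mul_mem (zpow_mem hTmem _) hSmem),
              ε', l'', hε', hne', hnz', ?_⟩
            rw [conj_conj, hid, hfin]
        · -- interior zero
          have hid := red2 S T hSneg m1 n l1' l2' ε hε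
          rw [hid] at htr
          have hlen2 : (bumpLast n (m1 :: l1') ++ l2').length ≤ f := by
            rw [List.length_append, bumpLast_length]
            simp only [List.length_append, List.length_cons, List.length_nil] at hlen ⊢
            omega
          obtain ⟨h2, h2mem, ε', l'', hε', hne', hnz', hfin⟩ :=
            ih (bumpLast n (m1 :: l1') ++ l2') (-ε) (eps_neg hε) hlen2 htr
          refine ⟨h2, h2mem, ε', l'', hε', hne', hnz', ?_⟩
          rw [hid, hfin]


end Grp

def SP (W : Matrix (Fin 2) (Fin 2) ℝ) : Prop :=
  (W 0 0)^2 < (W 1 0)^2 ∧ (W 0 1)^2 < (W 1 1)^2 ∧ (W 1 0)^2 < (W 1 1)^2 ∧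
  (W 0 0 + W 0 1)^2 < (W 1 0 + W 1 1)^2 ∧ (W 0 0 - W 0 1)^2 < (W 1 0 - W 1 1)^2
def QP (W : Matrix (Fin 2) (Fin 2) ℝ) : Prop :=
  0 < W 1 0 * (W 1 1 - W 1 0) ∧ 0 < W 1 0 * (W 0 0 + W 1 1)
def QN (W : Matrix (Fin 2) (Fin 2) ℝ) : Prop :=
  W 1 0 * (W 1 0 + W 1 1) < 0 ∧ W 1 0 * (W 0 0 + W 1 1) < 0

lemma SP_base (lam μ : ℝ) (hlam : 2 < lam) (hmu : lam ≤ |μ|) :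
    SP !![0,1;-1,-μ] ∧ (0 < μ → QP !![0,1;-1,-μ]) ∧ (μ < 0 → QN !![0,1;-1,-μ]) := by
  have h2 : 2 < |μ| := lt_of_lt_of_le hlam hmu
  have ha : |μ| ≤ |1 + μ| + 1 := by
    calc |μ| = |(1 + μ) + (-1)| := by ring_nf
    _ ≤ |1 + μ| + |(-1:ℝ)| := abs_add_le _ _
    _ = |1 + μ| + 1 := by norm_num
  have hb : |μ| ≤ |μ - 1| + 1 := by
    calc |μ| = |(μ - 1) + 1| := by ring_nf
    _ ≤ |μ - 1| + |(1:ℝ)| := abs_add_le _ _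
    _ = |μ - 1| + 1 := by norm_num
  simp [SP, QP, QN]
  refine ⟨⟨by linarith, ?_, ?_⟩, fun hpos => ⟨?_, hpos⟩, fun hneg => ⟨?_, hneg⟩⟩
  · rw [show (-1 + -μ : ℝ) = -(1+μ) by ring, abs_neg]; linarith
  · rw [show (-1 + μ : ℝ) = μ - 1 by ring]; linarith
  · have := abs_of_pos hpos; linarith
  · have := abs_of_neg hneg; linarith

lemma entry_reduce (a b c d : ℝ) :
    !![a,b;c,d] 0 0 = a ∧ !![a,b;c,d] 0 1 = b ∧ !![a,b;c,d] 1 0 = c ∧ !![a,b;c,d] 1 1 = d := by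
  norm_num

lemma SP_mat (lam μ a b c d : ℝ) (hlam : 2 < lam) (hmu : lam ≤ |μ|) (h : SP !![a,b;c,d]) :
    SP (!![0,1;-1,-μ] * !![a,b;c,d]) ∧
    (QP !![a,b;c,d] → QP (!![0,1;-1,-μ] * !![a,b;c,d])) ∧
    (QN !![a,b;c,d] → QN (!![0,1;-1,-μ] * !![a,b;c,d])) := by
  have hm : !![(0:ℝ),1;-1,-μ] * !![a,b;c,d] = !![c, d; -a - μ*c, -b - μ*d] := by
    rw [Matrix.mul_fin_two]; congr 1 <;> ring_nf
  obtain ⟨e00, e01, e10, e11⟩ := entry_reduce a b c d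
  simp only [SP, QP, QN, e00, e01, e10, e11] at h
  obtain ⟨h6, h7, h1, h2, h3⟩ := h
  obtain ⟨⟨p6, p7, p1, p2, p3⟩, hqp, hqn⟩ := step_real lam μ a b c d hlam hmu h6 h7 h1 h2 h3
  rw [hm]
  obtain ⟨f00, f01, f10, f11⟩ := entry_reduce c d (-a - μ*c) (-b - μ*d)
  simp only [SP, QP, QN, f00, f01, f10, f11, e00, e01, e10, e11]
  exact ⟨⟨p6, p7, p1, p2, p3⟩,
    fun hq => hqp hq.1, fun hq => hqn hq.1⟩

lemma mu_bound (lam : ℝ) (hlam : 2 < lam) (n : ℤ) (hn : n ≠ 0) : lam ≤ |(n:ℝ)*lam| := by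
  have h1 : (1:ℝ) ≤ |(n:ℝ)| := by
    have := Int.one_le_abs hn
    have e : |(n:ℝ)| = ((|n| : ℤ) : ℝ) := by rw [Int.cast_abs]
    rw [e]; exact_mod_cast this
  have hlam0 : 0 < lam := by linarith
  calc lam = 1 * lam := (one_mul lam).symm
  _ ≤ |(n:ℝ)| * lam := by nlinarith
  _ = |(n:ℝ)| * |lam| := by rw [abs_of_pos hlam0]
  _ = |(n:ℝ) * lam| := (abs_mul _ _).symm

lemma sword_coe_cons (lam : ℝ) (S T : SL(2,ℝ))
    (hS : (S : Matrix (Fin 2) (Fin 2) ℝ) = !![0, 1; -1, 0])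
    (hT : (T : Matrix (Fin 2) (Fin 2) ℝ) = !![1, lam; 0, 1]) (n : ℤ) (l : List ℤ) :
    ((sword S T (n :: l) : SL(2,ℝ)) : Matrix (Fin 2) (Fin 2) ℝ)
      = !![0,1;-1,-((n:ℝ)*lam)] * ((sword S T l : SL(2,ℝ)) : Matrix (Fin 2) (Fin 2) ℝ) := by
  show ((S * T^n * sword S T l : SL(2,ℝ)) : Matrix (Fin 2) (Fin 2) ℝ) = _
  rw [Matrix.SpecialLinearGroup.coe_mul, Matrix.SpecialLinearGroup.coe_mul, hS,
    T_zpow T lam hT n, Matrix.mul_fin_two]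
  congr 1
  norm_num

lemma INV (lam : ℝ) (S T : SL(2,ℝ)) (hlam : 2 < lam)
    (hS : (S : Matrix (Fin 2) (Fin 2) ℝ) = !![0, 1; -1, 0])
    (hT : (T : Matrix (Fin 2) (Fin 2) ℝ) = !![1, lam; 0, 1]) :
    ∀ (l : List ℤ) (n : ℤ), n ≠ 0 → (∀ k ∈ l, k ≠ 0) →
    SP ((sword S T (n :: l) : SL(2,ℝ)) : Matrix (Fin 2) (Fin 2) ℝ) ∧
    (0 < (n :: l).getLast (List.cons_ne_nil n l) →
      QP ((sword S T (n :: l) : SL(2,ℝ)) : Matrix (Fin 2) (Fin 2) ℝ)) ∧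
    ((n :: l).getLast (List.cons_ne_nil n l) < 0 →
      QN ((sword S T (n :: l) : SL(2,ℝ)) : Matrix (Fin 2) (Fin 2) ℝ)) := by
  intro l
  induction l with
  | nil =>
    intro n hn _
    have hmu := mu_bound lam hlam n hn
    have hW : ((sword S T [n] : SL(2,ℝ)) : Matrix (Fin 2) (Fin 2) ℝ)
        = !![0,1;-1,-((n:ℝ)*lam)] := by
      rw [sword_coe_cons lam S T hS hT n [],
        show ((sword S T [] : SL(2,ℝ)) : Matrix (Fin 2) (Fin 2) ℝ) = 1 from
          Matrix.SpecialLinearGroup.coe_one, Matrix.mul_one]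
    rw [hW]
    have base := SP_base lam ((n:ℝ)*lam) hlam hmu
    have hglast : (([n] : List ℤ).getLast (List.cons_ne_nil n [])) = n := rfl
    refine ⟨base.1, fun hpos => base.2.1 ?_, fun hneg => base.2.2 ?_⟩
    · rw [hglast] at hpos
      have : (0:ℝ) < (n:ℝ) := by exact_mod_cast hpos
      nlinarith
    · rw [hglast] at hneg
      have : (n:ℝ) < 0 := by exact_mod_cast hneg
      nlinarith
  | cons k l' ih =>
    intro n hn hknz
    have ih' := ih k (hknz k List.mem_cons_self) (fun x hx => hknz x (List.mem_cons_of_mem _ hx))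
    have hmu := mu_bound lam hlam n hn
    have hW := sword_coe_cons lam S T hS hT n (k :: l')
    set W' := ((sword S T (k :: l') : SL(2,ℝ)) : Matrix (Fin 2) (Fin 2) ℝ) with hW'def
    have hW'eta : W' = !![W' 0 0, W' 0 1; W' 1 0, W' 1 1] := Matrix.eta_fin_two W'
    rw [hW'eta] at ih'
    have key := SP_mat lam ((n:ℝ)*lam) (W' 0 0) (W' 0 1) (W' 1 0) (W' 1 1) hlam hmu ih'.1
    rw [hW, hW'eta]
    have hglast : ((n :: k :: l').getLast (List.cons_ne_nil n (k::l')))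
        = ((k :: l').getLast (List.cons_ne_nil k l')) := List.getLast_cons _
    refine ⟨key.1, fun hpos => key.2.1 (ih'.2.1 ?_), fun hneg => key.2.2 (ih'.2.2 ?_)⟩
    · rwa [hglast] at hpos
    · rwa [hglast] at hneg



lemma neg_of_mul_neg (p q : ℝ) (h : p*q < 0) (hq : 0 < q) : p < 0 := by
  by_contra hp; push_neg at hp; nlinarith

lemma pos_of_mul_neg (p q : ℝ) (h : p*q < 0) (hq : q < 0) : 0 < p := by
  by_contra hp; push_neg at hp; nlinarith

lemma Qm1 (a b c d : ℝ) (h3 : (a-b)^2 < (c-d)^2) (h4 : 0 < c*(d-c)) : c*(c+a-d-b) < 0 := by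
  have e1 : 0 < (d-c)*((d-c)+(b-a)) := by nlinarith [sq_nonneg ((d-c)+(b-a))]
  have hdc2 : 0 < (d-c)^2 := by nlinarith [sq_nonneg (a-b)]
  have h5 := mul_pos h4 e1
  rw [show (c*(d-c))*((d-c)*((d-c)+(b-a))) = (c*((d-c)+(b-a)))*((d-c)^2) from by ring] at h5
  have h6 := posdiv _ _ h5 hdc2
  have e2 : c*(c+a-d-b) = -(c*((d-c)+(b-a))) := by ring
  linarith

lemma Qp1 (a b c d : ℝ) (h2 : (a+b)^2 < (c+d)^2) (h4 : c*(c+d) < 0) : c*(c+d-a-b) < 0 := by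
  have e1 : 0 < (c+d)*((c+d)-(a+b)) := by nlinarith [sq_nonneg ((c+d)-(a+b))]
  have hcd2 : 0 < (c+d)^2 := by nlinarith [sq_nonneg (a+b)]
  have h5 := mul_neg_of_neg_of_pos h4 e1
  rw [show (c*(c+d))*((c+d)*((c+d)-(a+b))) = (c*((c+d)-(a+b)))*((c+d)^2) from by ring] at h5
  have h6 := neg_of_mul_neg _ _ h5 hcd2
  have e2 : c*(c+d-a-b) = c*((c+d)-(a+b)) := by ring
  linarith

lemma SPQ_neg (W : Matrix (Fin 2) (Fin 2) ℝ) :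
    (SP W → SP (-W)) ∧ (QP W → QP (-W)) ∧ (QN W → QN (-W)) := by
  simp only [SP, QP, QN, Matrix.neg_apply]
  refine ⟨fun h => ⟨?_, ?_, ?_, ?_, ?_⟩, fun h => ⟨?_, ?_⟩, fun h => ⟨?_, ?_⟩⟩
  · nlinarith [h.1]
  · nlinarith [h.2.1]
  · nlinarith [h.2.2.1]
  · nlinarith [h.2.2.2.1]
  · nlinarith [h.2.2.2.2]
  · nlinarith [h.1]
  · nlinarith [h.2]
  · nlinarith [h.1]
  · nlinarith [h.2]

end CrossSec

open CrossSec

/-- For `λ > 2`, every `g ∈ Γ_λ` with `tr g > 2` has a `Γ_λ`-conjugate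
`g' = !![a,b;c,d]` with `c ≠ 0` whose repelling/attracting fixed points `x₋, x₊` satisfy
`x₋ < −1 < x₊` or `x₊ < 1 < x₋` (the cross section `Ĉ_R` is intersected by every
periodic geodesic). -/
theorem crossSection_R_hits_every_periodic_geodesic
    (lam : ℝ) (hlam : 2 < lam)
    (S T : SL(2, ℝ))
    (hS : (S : Matrix (Fin 2) (Fin 2) ℝ) = !![0, 1; -1, 0])
    (hT : (T : Matrix (Fin 2) (Fin 2) ℝ) = !![1, lam; 0, 1])
    (Γ : Subgroup SL(2, ℝ)) (hΓ : Γ = Subgroup.closure {S, T}) :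
    ∀ g ∈ Γ, 2 < Matrix.trace (g : Matrix (Fin 2) (Fin 2) ℝ) →
      ∃ h ∈ Γ, ∃ a b c d : ℝ,
        ((h * g * h⁻¹ : SL(2, ℝ)) : Matrix (Fin 2) (Fin 2) ℝ) = !![a, b; c, d] ∧
        c ≠ 0 ∧
        (((a - d - Real.sqrt ((a + d) ^ 2 - 4)) / (2 * c) < -1 ∧
            -1 < (a - d + Real.sqrt ((a + d) ^ 2 - 4)) / (2 * c)) ∨
          ((a - d + Real.sqrt ((a + d) ^ 2 - 4)) / (2 * c) < 1 ∧
            1 < (a - d - Real.sqrt ((a + d) ^ 2 - 4)) / (2 * c))) := by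
  subst hΓ
  intro g hg htr
  have hSneg : S * S = -1 := by
    apply Subtype.ext
    rw [N_coe S hS]
    simp
  obtain ⟨ε, m, l, hε, rfl⟩ := normal_form S T hSneg g hg
  rcases eq_or_ne l [] with rfl | hne
  · exfalso
    apply not_tr_eps_T T lam hT ε hε m
    rw [show ε * T^m = ε * (T^m * sword S T []) from by simp [sword]]
    exact htr
  · have hid0 : T^(-m) * (ε * (T^m * sword S T l)) * (T^(-m))⁻¹
        = ε * sword S T (bumpLast m l) := by
      rw [← sword_mul_T S T l hne m]
      rcases hε with rfl | rfl <;>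
        simp only [one_mul, neg_mul, mul_neg, neg_neg, neg_inj, _root_.zpow_neg] <;> group
    have htr2 : 2 < Matrix.trace
        ((ε * sword S T (bumpLast m l) : SL(2,ℝ)) : Matrix (Fin 2) (Fin 2) ℝ) := by
      rw [← hid0, trace_conj]
      exact htr
    obtain ⟨h2, h2mem, ε', l', hε', hne', hnz', hfin⟩ :=
      reduce S T lam hS hT hSneg (bumpLast m l).length (bumpLast m l) ε hε le_rfl htr2
    have hTmem : T ∈ Subgroup.closure ({S, T} : Set (SL(2,ℝ))) :=
      Subgroup.subset_closure (by simp)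
    refine ⟨h2 * T^(-m), mul_mem h2mem (zpow_mem hTmem _), ?_⟩
    have hconj : (h2 * T^(-m)) * (ε * (T^m * sword S T l)) * (h2 * T^(-m))⁻¹
        = ε' * sword S T l' := by
      rw [conj_conj, hid0, hfin]
    set M := (((h2 * T^(-m)) * (ε * (T^m * sword S T l)) * (h2 * T^(-m))⁻¹ : SL(2,ℝ)) :
      Matrix (Fin 2) (Fin 2) ℝ) with hMdef
    refine ⟨M 0 0, M 0 1, M 1 0, M 1 1, Matrix.eta_fin_two M, ?_⟩
    have htrM : 2 < M 0 0 + M 1 1 := by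
      rw [show M 0 0 + M 1 1 = Matrix.trace M from (Matrix.trace_fin_two M).symm, hMdef,
        trace_conj]
      exact htr
    have hdetM : M 0 0 * M 1 1 - M 0 1 * M 1 0 = 1 := by
      rw [show M 0 0 * M 1 1 - M 0 1 * M 1 0 = Matrix.det M from (Matrix.det_fin_two M).symm,
        hMdef]
      exact Matrix.SpecialLinearGroup.det_coe _
    obtain ⟨n', l'', rfl⟩ := List.exists_cons_of_ne_nil hne'
    have hinv := INV lam S T hlam hS hT l'' n' (hnz' n' List.mem_cons_self)
      (fun x hx => hnz' x (List.mem_cons_of_mem _ hx))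
    set W := ((sword S T (n' :: l'') : SL(2,ℝ)) : Matrix (Fin 2) (Fin 2) ℝ) with hWdef
    have hMW : SP M ∧
        (0 < (n' :: l'').getLast (List.cons_ne_nil n' l'') → QP M) ∧
        ((n' :: l'').getLast (List.cons_ne_nil n' l'') < 0 → QN M) := by
      rcases hε' with rfl | rfl
      · have : M = W := by rw [hMdef, hconj, one_mul]
        rw [this]
        exact hinv
      · have : M = -W := by
          rw [hMdef, hconj, neg_one_mul]
          simp [hWdef]
        rw [this]
        exact ⟨(SPQ_neg W).1 hinv.1, fun hp => (SPQ_neg W).2.1 (hinv.2.1 hp),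
          fun hp => (SPQ_neg W).2.2 (hinv.2.2 hp)⟩
    have hglast_ne : (n' :: l'').getLast (List.cons_ne_nil n' l'') ≠ 0 :=
      hnz' _ (List.getLast_mem _)
    rcases lt_trichotomy ((n' :: l'').getLast (List.cons_ne_nil n' l'')) 0 with hneg | hzero | hpos
    · -- QN case
      obtain ⟨q1, q2⟩ := hMW.2.2 hneg
      have hc : M 1 0 < 0 := neg_of_mul_neg _ _ q2 (by linarith)
      have hQ := Qp1 (M 0 0) (M 0 1) (M 1 0) (M 1 1) hMW.1.2.2.2.1 q1
      have hX : 0 < M 1 0 + M 1 1 - M 0 0 - M 0 1 := by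
        have := pos_of_mul_neg (M 1 0 + M 1 1 - M 0 0 - M 0 1) (M 1 0) (by linarith [hQ]) hc
        exact this
      refine ⟨ne_of_lt hc, Or.inr ?_⟩
      exact final_neg (M 0 0) (M 0 1) (M 1 0) (M 1 1) hdetM htrM hc hX
    · exact absurd hzero hglast_ne
    · -- QP case
      obtain ⟨q1, q2⟩ := hMW.2.1 hpos
      have hc : 0 < M 1 0 := posdiv _ _ q2 (by linarith)
      have hQ := Qm1 (M 0 0) (M 0 1) (M 1 0) (M 1 1) hMW.1.2.2.2.2 q1
      have hX : M 1 0 + M 0 0 - M 1 1 - M 0 1 < 0 := by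
        have := neg_of_mul_neg (M 1 0 + M 0 0 - M 1 1 - M 0 1) (M 1 0) (by linarith [hQ]) hc
        exact this
      refine ⟨ne_of_gt hc, Or.inl ?_⟩
      exact final_pos (M 0 0) (M 0 1) (M 1 0) (M 1 1) hdetM htrM hc (by linarith)
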